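/- Let A be a random positive semidefinite linear operator on ℝᵖ with E[tr(A)] < ∞, let q ≥ 1, and suppose there is h > 0 such that E[⟨v, A v⟩^q] ≤ h^q · E[⟨v, A v⟩]^q for all v ∈ ℝᵖ. Then E[tr(A)^q] ≤ h^q · E[tr(A)]^q. -/

import Mathlib

open MeasureTheory Matrix

lemma diag_eq_single_dot {p : ℕ} (A : Matrix (Fin p) (Fin p) ℝ) (i : Fin p) :
    (Pi.single i 1 : Fin p → ℝ) ⬝ᵥ A.mulVec (Pi.single i 1) = A i i := by
  simp [Matrix.mulVec, dotProduct, Pi.single_apply]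

/-- Trace-power lemma: if `A` is a random positive semidefinite matrix with integrable trace
and `E[⟨v, A v⟩^q] ≤ h^q E[⟨v, A v⟩]^q` for all `v`, then `E[tr(A)^q] ≤ h^q E[tr(A)]^q`. -/
theorem trace_power_bound {Ω : Type*} [MeasurableSpace Ω]
    (μ : Measure Ω) [IsProbabilityMeasure μ] {p : ℕ}
    (A : Ω → Matrix (Fin p) (Fin p) ℝ)
    (hmeas : ∀ i j, Measurable (fun ω => A ω i j))
    (hpsd : ∀ᵐ ω ∂μ, (A ω).PosSemidef)
    (htr : Integrable (fun ω => (A ω).trace) μ)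
    (q : ℝ) (hq : 1 ≤ q) (h : ℝ) (hh : 0 < h)
    (hint : ∀ v : Fin p → ℝ, Integrable (fun ω => (v ⬝ᵥ (A ω).mulVec v) ^ q) μ)
    (hmom : ∀ v : Fin p → ℝ,
      ∫ ω, (v ⬝ᵥ (A ω).mulVec v) ^ q ∂μ ≤ h ^ q * (∫ ω, v ⬝ᵥ (A ω).mulVec v ∂μ) ^ q) :
    ∫ ω, (A ω).trace ^ q ∂μ ≤ h ^ q * (∫ ω, (A ω).trace ∂μ) ^ q := by
  have hq0 : (0:ℝ) < q := lt_of_lt_of_le one_pos hq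
  -- diagonal entries nonneg a.e.
  have hdiag : ∀ᵐ ω ∂μ, ∀ i, 0 ≤ A ω i i := by
    filter_upwards [hpsd] with ω hω i
    have := hω.dotProduct_mulVec_nonneg (Pi.single i 1)
    rw [star_trivial, diag_eq_single_dot] at this
    exact this
  have htrnn : ∀ᵐ ω ∂μ, 0 ≤ (A ω).trace := by
    filter_upwards [hdiag] with ω hω
    exact Finset.sum_nonneg fun i _ => hω i
  have hItr : 0 ≤ ∫ ω, (A ω).trace ∂μ := integral_nonneg_of_ae htrnn
  by_cases hIq : Integrable (fun ω => (A ω).trace ^ q) μ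
  · -- diagonal entries integrable
    have hfi_int : ∀ i : Fin p, Integrable (fun ω => A ω i i) μ := by
      intro i
      refine htr.mono ((hmeas i i).aestronglyMeasurable) ?_
      filter_upwards [hdiag] with ω hω
      have : |A ω i i| ≤ (A ω).trace := by
        rw [abs_of_nonneg (hω i)]
        exact Finset.single_le_sum (fun j _ => hω j) (Finset.mem_univ i)
      simpa [Real.norm_eq_abs, abs_of_nonneg (Finset.sum_nonneg fun j _ => hω j),
        Matrix.trace] using this
    have hfiq_int : ∀ i : Fin p, Integrable (fun ω => (A ω i i) ^ q) μ := by
      intro i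
      have := hint (Pi.single i 1)
      simpa [diag_eq_single_dot] using this
    have hfiq_nn : ∀ i : Fin p, ∀ᵐ ω ∂μ, 0 ≤ (A ω i i) ^ q := by
      intro i; filter_upwards [hdiag] with ω hω; exact Real.rpow_nonneg (hω i) q
    -- eLpNorm' of each diagonal
    have keyi : ∀ i : Fin p, eLpNorm' (fun ω => A ω i i) q μ
        = (ENNReal.ofReal (∫ ω, (A ω i i) ^ q ∂μ)) ^ (1/q) := by
      intro i
      rw [eLpNorm', ofReal_integral_eq_lintegral_ofReal (hfiq_int i) (hfiq_nn i)]
      congr 1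
      apply lintegral_congr_ae
      filter_upwards [hdiag] with ω hω
      rw [← ENNReal.ofReal_rpow_of_nonneg (hω i) hq0.le]
      congr 1
      simp [Real.enorm_of_nonneg (hω i), Real.nnnorm_of_nonneg (hω i), ENNReal.ofReal, Real.toNNReal_of_nonneg (hω i)]
    have keytr : eLpNorm' (fun ω => (A ω).trace) q μ
        = (ENNReal.ofReal (∫ ω, (A ω).trace ^ q ∂μ)) ^ (1/q) := by
      have htq_nn : ∀ᵐ ω ∂μ, 0 ≤ (A ω).trace ^ q := by
        filter_upwards [htrnn] with ω hω; exact Real.rpow_nonneg hω q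
      rw [eLpNorm', ofReal_integral_eq_lintegral_ofReal hIq htq_nn]
      congr 1
      apply lintegral_congr_ae
      filter_upwards [htrnn] with ω hω
      rw [← ENNReal.ofReal_rpow_of_nonneg hω hq0.le]
      congr 1
      simp [Real.enorm_of_nonneg hω, Real.nnnorm_of_nonneg hω, ENNReal.ofReal, Real.toNNReal_of_nonneg hω]
    -- Minkowski
    have htr_eq : (fun ω => (A ω).trace) = ∑ i : Fin p, fun ω => A ω i i := by
      funext ω; simp [Matrix.trace, Matrix.diag]
    have hmink : eLpNorm' (fun ω => (A ω).trace) q μ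
        ≤ ∑ i : Fin p, eLpNorm' (fun ω => A ω i i) q μ := by
      rw [htr_eq]
      exact eLpNorm'_sum_le (fun i _ => (hmeas i i).aestronglyMeasurable) hq
    -- bound each term
    have hterm : ∀ i : Fin p, eLpNorm' (fun ω => A ω i i) q μ
        ≤ ENNReal.ofReal h * ENNReal.ofReal (∫ ω, A ω i i ∂μ) := by
      intro i
      rw [keyi i]
      have hmi := hmom (Pi.single i 1)
      simp only [diag_eq_single_dot] at hmi
      have hIi : 0 ≤ ∫ ω, A ω i i ∂μ := by
        apply integral_nonneg_of_ae; filter_upwards [hdiag] with ω hω; exact hω i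
      calc (ENNReal.ofReal (∫ ω, (A ω i i) ^ q ∂μ)) ^ (1/q)
          ≤ (ENNReal.ofReal (h ^ q * (∫ ω, A ω i i ∂μ) ^ q)) ^ (1/q) := by
            exact ENNReal.rpow_le_rpow (ENNReal.ofReal_le_ofReal hmi) (by positivity)
        _ = ENNReal.ofReal h * ENNReal.ofReal (∫ ω, A ω i i ∂μ) := by
            rw [ENNReal.ofReal_mul (by positivity),
              ← ENNReal.ofReal_rpow_of_nonneg hh.le hq0.le,
              ← ENNReal.ofReal_rpow_of_nonneg hIi hq0.le,
              ENNReal.mul_rpow_of_nonneg _ _ (by positivity),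
              ← ENNReal.rpow_mul, ← ENNReal.rpow_mul,
              mul_one_div_cancel hq0.ne', ENNReal.rpow_one, ENNReal.rpow_one]
    -- combine
    have hsum : ∑ i : Fin p, eLpNorm' (fun ω => A ω i i) q μ
        ≤ ENNReal.ofReal h * ENNReal.ofReal (∫ ω, (A ω).trace ∂μ) := by
      calc ∑ i : Fin p, eLpNorm' (fun ω => A ω i i) q μ
          ≤ ∑ i : Fin p, ENNReal.ofReal h * ENNReal.ofReal (∫ ω, A ω i i ∂μ) :=
            Finset.sum_le_sum fun i _ => hterm i
        _ = ENNReal.ofReal h * ∑ i : Fin p, ENNReal.ofReal (∫ ω, A ω i i ∂μ) := by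
            rw [Finset.mul_sum]
        _ = ENNReal.ofReal h * ENNReal.ofReal (∫ ω, (A ω).trace ∂μ) := by
            congr 1
            rw [← ENNReal.ofReal_sum_of_nonneg (fun i _ => by
              apply integral_nonneg_of_ae; filter_upwards [hdiag] with ω hω; exact hω i)]
            congr 1
            rw [← integral_finset_sum _ (fun i _ => hfi_int i)]
            exact integral_congr_ae (Filter.Eventually.of_forall fun ω => by
              simp [Matrix.trace, Matrix.diag])
    have hfinal : (ENNReal.ofReal (∫ ω, (A ω).trace ^ q ∂μ)) ^ (1/q)
        ≤ ENNReal.ofReal h * ENNReal.ofReal (∫ ω, (A ω).trace ∂μ) := by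
      rw [← keytr]; exact hmink.trans hsum
    -- raise to power q
    have h2 : ENNReal.ofReal (∫ ω, (A ω).trace ^ q ∂μ)
        ≤ ENNReal.ofReal (h ^ q * (∫ ω, (A ω).trace ∂μ) ^ q) := by
      have := ENNReal.rpow_le_rpow hfinal hq0.le
      rw [← ENNReal.rpow_mul, one_div_mul_cancel hq0.ne', ENNReal.rpow_one] at this
      refine this.trans_eq ?_
      rw [ENNReal.mul_rpow_of_nonneg _ _ hq0.le,
        ENNReal.ofReal_rpow_of_nonneg hh.le hq0.le,
        ENNReal.ofReal_rpow_of_nonneg hItr hq0.le,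
        ← ENNReal.ofReal_mul (by positivity)]
    rw [ENNReal.ofReal_le_ofReal_iff (by positivity)] at h2
    exact h2
  · rw [integral_undef hIq]
    positivity
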